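/- arXiv:2304.10243 — 5 statements merged into one kernel-verified Lean document; each statement's English description precedes it below -/
import Mathlib

section
/- Two signatures σ and σ' on the same graph G are switching equivalent if and only if the signed graphs (G, σ) and (G, σ') have the same set of negative cycles. -/
/-!
Signed (simple) graphs: a signature is `σ : Sym2 V → Bool` (`true` = negative edge).
Switching equivalence, frustration index, negative cycles, criticality, edge-cuts.
-/

variable {V : Type*}

/-- The parity (as a `Bool`) of a `Sym2`-pair with respect to a vertex `2`-coloring `f`;
this is `true` exactly on the edges of the cut determined by `f`. -/
def cutParity (f : V → Bool) : Sym2 V → Bool :=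
  Sym2.lift ⟨fun u v => xor (f u) (f v), fun _ _ => Bool.xor_comm _ _⟩

/-- Two signatures on `G` are switching equivalent if one is obtained from the other by
switching at a set of vertices (encoded by `f : V → Bool`), i.e. the signs of exactly the
edges of the corresponding cut get multiplied by `-`. -/
def SwitchEquiv (G : SimpleGraph V) (σ σ' : Sym2 V → Bool) : Prop :=
  ∃ f : V → Bool, ∀ e ∈ G.edgeSet, σ' e = xor (σ e) (cutParity f e)

/-- The number of negative edges of `(G, σ)`. -/
noncomputable def negEdgeCount (G : SimpleGraph V) (σ : Sym2 V → Bool) : ℕ :=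
  {e ∈ G.edgeSet | σ e = true}.ncard

/-- The frustration index of `(G, σ)`: the minimum number of negative edges over all
signatures switching equivalent to `σ`. -/
noncomputable def frustration (G : SimpleGraph V) (σ : Sym2 V → Bool) : ℕ :=
  sInf {n | ∃ σ' : Sym2 V → Bool, SwitchEquiv G σ σ' ∧ negEdgeCount G σ' = n}

/-- A negative cycle of `(G, σ)`: a cycle with an odd number of negative edges. -/
def IsNegCycle (G : SimpleGraph V) (σ : Sym2 V → Bool) {v : V} (w : G.Walk v v) : Prop :=
  w.IsCycle ∧ Odd (w.edges.countP σ)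

/-- `(G, σ)` is critically `k`-frustrated: its frustration index is `k`, and deleting any
edge decreases the frustration index to `k - 1`. -/
def CriticallyFrustrated (G : SimpleGraph V) (σ : Sym2 V → Bool) (k : ℕ) : Prop :=
  frustration G σ = k ∧ ∀ e ∈ G.edgeSet, frustration (G.deleteEdges {e}) σ = k - 1


section AuxSwitching

open SimpleGraph

private lemma countP_xor_mod (l : List (Sym2 V)) (p q : Sym2 V → Bool) :
    l.countP (fun e => xor (p e) (q e)) % 2 = (l.countP p + l.countP q) % 2 := by
  induction l with
  | nil => simp
  | cons a t ih =>
    simp only [List.countP_cons]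
    cases hp : p a <;> cases hq : q a <;> simp only [hp, hq, Bool.xor_false, Bool.xor_true,
      Bool.not_false, Bool.not_true, if_true, if_false] <;> simp <;> omega

private lemma cutParity_walk (G : SimpleGraph V) (f : V → Bool) :
    ∀ {a b : V} (p : G.Walk a b),
      p.edges.countP (cutParity f) % 2 = (if xor (f a) (f b) then 1 else 0) := by
  intro a b p
  induction p with
  | nil => simp
  | @cons a c b h p ih =>
    have he : cutParity f s(a, c) = xor (f a) (f c) := rfl
    simp only [Walk.edges_cons, List.countP_cons, he]
    cases ha : f a <;> cases hc : f c <;> cases hb : f b <;> simp_all <;> omega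

private lemma path_edges_single {G : SimpleGraph V} {u v : V} (p : G.Walk u v)
    (hp : p.support.Nodup) (he : s(v, u) ∈ p.edges) : p.edges = [s(u, v)] := by
  cases p with
  | nil => simp at he
  | @cons _ x _ h2 p2 =>
    rw [SimpleGraph.Walk.support_cons, List.nodup_cons] at hp
    simp only [SimpleGraph.Walk.edges_cons, List.mem_cons] at he
    rcases he with he | he
    · have hx : x = v := by
        rw [Sym2.eq_iff] at he
        rcases he with ⟨hv, hu⟩ | ⟨hv, _⟩
        · exact hu ▸ hv.symm
        · exact hv.symm
      subst hx
      cases p2 with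
      | nil => rfl
      | cons h3 p3 =>
        exfalso
        exact ((SimpleGraph.Walk.support_cons _ _) ▸ hp.2).notMem
          (SimpleGraph.Walk.end_mem_support p3) |>.elim
    · exact absurd (SimpleGraph.Walk.snd_mem_support_of_mem_edges p2 he) hp.1

open SimpleGraph.Walk in
private lemma closedWalk_countP_even {G : SimpleGraph V} (δ : Sym2 V → Bool)
    (H : ∀ (v : V) (c : G.Walk v v), c.IsCycle → c.edges.countP δ % 2 = 0) :
    ∀ (n : ℕ) {v : V} (c : G.Walk v v), c.length ≤ n → c.edges.countP δ % 2 = 0 := by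
  classical
  intro n
  induction n with
  | zero =>
    intro v c hc
    cases c with
    | nil => simp
    | cons h p => simp [SimpleGraph.Walk.length_cons] at hc
  | succ n ih =>
    intro v c hlen
    cases c with
    | nil => simp
    | @cons _ u _ h p =>
      by_cases hnd : p.support.Nodup
      · by_cases hedge : s(v, u) ∈ p.edges
        · rw [edges_cons, path_edges_single p hnd hedge, Sym2.eq_swap (a := v)]
          cases hd : δ s(u, v) <;> simp [List.countP_cons, hd]
        · exact H v (SimpleGraph.Walk.cons h p)
            ((cons_isCycle_iff p h).2 ⟨SimpleGraph.Walk.IsPath.mk' hnd, hedge⟩)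
      · obtain ⟨w, hwdup⟩ := List.exists_duplicate_iff_not_nodup.2 hnd
        have hw : w ∈ p.support := hwdup.mem
        have hcount : 2 ≤ p.support.count w := List.duplicate_iff_two_le_count.1 hwdup
        have hsplit := SimpleGraph.Walk.take_spec p hw
        have hsupp : p.support = (p.takeUntil w hw).support ++ (p.dropUntil w hw).support.tail := by
          conv_lhs => rw [← hsplit]
          exact support_append _ _
        have hone := SimpleGraph.Walk.count_support_takeUntil_eq_one p hw
        have hwtail : w ∈ (p.dropUntil w hw).support.tail := by
          by_contra hcon
          rw [hsupp, List.count_append] at hcount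
          have : (p.dropUntil w hw).support.tail.count w = 0 := List.count_eq_zero.2 hcon
          omega
        have hnnil : ¬ (p.dropUntil w hw).Nil := by
          intro hnil
          rw [SimpleGraph.Walk.nil_iff_length_eq] at hnil
          have := SimpleGraph.Walk.length_support (p.dropUntil w hw)
          have htne : (p.dropUntil w hw).support.tail = [] := by
            have hlen2 : (p.dropUntil w hw).support.length = 1 := by omega
            cases hsup : (p.dropUntil w hw).support with
            | nil => rfl
            | cons a t => rw [hsup] at hlen2; simp at hlen2; simp [hlen2]
          rw [htne] at hwtail; simp at hwtail
        rw [SimpleGraph.Walk.not_nil_iff] at hnnil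
        obtain ⟨x, h3, q3, hq⟩ := hnnil
        have hw3 : w ∈ q3.support := by
          rw [hq, support_cons, List.tail_cons] at hwtail; exact hwtail
        set tU := p.takeUntil w hw with htU
        set a1 := q3.takeUntil w hw3 with ha1
        set a2 := q3.dropUntil w hw3 with ha2
        have hq3 : q3.edges = a1.edges ++ a2.edges := by
          conv_lhs => rw [← SimpleGraph.Walk.take_spec q3 hw3]
          exact edges_append _ _
        have hq3len : a1.length + a2.length = q3.length := by
          conv_rhs => rw [← SimpleGraph.Walk.take_spec q3 hw3]
          rw [length_append]
        have hpedges : p.edges = tU.edges ++ (s(w, x) :: q3.edges) := by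
          conv_lhs => rw [← hsplit]
          rw [edges_append, hq, edges_cons]
        have hplen : tU.length + (1 + q3.length) = p.length := by
          conv_rhs => rw [← hsplit]
          rw [length_append, hq, length_cons]
          omega
        have hlenc : p.length ≤ n := by
          rw [length_cons] at hlen; omega
        have ih1 := ih (SimpleGraph.Walk.cons h3 a1) (by rw [length_cons]; omega)
        have ih2 := ih (SimpleGraph.Walk.cons h (tU.append a2))
          (by rw [length_cons, length_append]; omega)
        rw [edges_cons, List.countP_cons] at ih1 ih2 ⊢
        rw [edges_append, List.countP_append] at ih2
        rw [hpedges, List.countP_append, List.countP_cons, hq3, List.countP_append]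
        omega

end AuxSwitching

/-- Zaslavsky. Two signatures on the same graph are switching
equivalent if and only if they determine the same set of negative cycles. -/
theorem switchEquiv_iff_same_negCycles (G : SimpleGraph V) (σ σ' : Sym2 V → Bool) :
    SwitchEquiv G σ σ' ↔
      ∀ (v : V) (w : G.Walk v v), w.IsCycle →
        (IsNegCycle G σ w ↔ IsNegCycle G σ' w) := by
    classical
  constructor
  · rintro ⟨f, hf⟩ v w hcyc
    have hcongr : w.edges.countP σ' = w.edges.countP (fun e => xor (σ e) (cutParity f e)) :=
      List.countP_congr (fun e he => by rw [hf e (w.edges_subset_edgeSet he)])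
    have hcut := cutParity_walk G f w
    simp only [Bool.xor_self, if_neg (Bool.false_ne_true)] at hcut
    have hpar : w.edges.countP σ' % 2 = w.edges.countP σ % 2 := by
      rw [hcongr, countP_xor_mod]
      omega
    simp only [IsNegCycle, hcyc, true_and, Nat.odd_iff, hpar]
  · intro h
    set δ : Sym2 V → Bool := fun e => xor (σ e) (σ' e) with hδ
    have H : ∀ (v : V) (c : G.Walk v v), c.IsCycle → c.edges.countP δ % 2 = 0 := by
      intro v c hc
      have := h v c hc
      simp only [IsNegCycle, hc, true_and, Nat.odd_iff] at this
      rw [hδ, countP_xor_mod]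
      omega
    have hreach : ∀ x : V, G.Reachable ((G.connectedComponentMk x).out) x := by
      intro x
      apply SimpleGraph.ConnectedComponent.eq.mp
      exact (G.connectedComponentMk x).out_eq
    set f : V → Bool := fun x => decide (((hreach x).some.edges.countP δ) % 2 = 1) with hfdef
    refine ⟨f, ?_⟩
    intro e he
    induction e with
    | h a b =>
      have hadj : G.Adj a b := (SimpleGraph.mem_edgeSet G).1 he
      have hrep : (G.connectedComponentMk a).out = (G.connectedComponentMk b).out := by
        rw [SimpleGraph.ConnectedComponent.sound hadj.reachable]
      set wa := (hreach a).some with hwa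
      set wb := (hreach b).some with hwb
      set c : G.Walk ((G.connectedComponentMk a).out) ((G.connectedComponentMk a).out) :=
        wa.append (SimpleGraph.Walk.cons hadj ((wb.reverse).copy rfl hrep.symm)) with hc
      have heven := closedWalk_countP_even δ H c.length c le_rfl
      have hcedges : c.edges = wa.edges ++ (s(a, b) :: wb.edges.reverse) := by
        rw [hc, SimpleGraph.Walk.edges_append, SimpleGraph.Walk.edges_cons,
          SimpleGraph.Walk.edges_copy, SimpleGraph.Walk.edges_reverse]
      rw [hcedges, List.countP_append, List.countP_cons, List.countP_reverse] at heven
      have hfa : f a = decide ((wa.edges.countP δ) % 2 = 1) := rfl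
      have hfb : f b = decide ((wb.edges.countP δ) % 2 = 1) := rfl
      have hcut : cutParity f s(a, b) = xor (f a) (f b) := rfl
      have hδe : δ s(a, b) = xor (σ s(a, b)) (σ' s(a, b)) := rfl
      rw [hcut, hfa, hfb]
      rcases Nat.mod_two_eq_zero_or_one (wa.edges.countP δ) with h1 | h1 <;>
        rcases Nat.mod_two_eq_zero_or_one (wb.edges.countP δ) with h2 | h2 <;>
        cases hσ : σ s(a, b) <;> cases hσ' : σ' s(a, b) <;>
        simp_all [hδe] <;> omega
end

section
/- Let (G, σ) be a k-frustrated signed graph with |E⁻_σ| = ℓ(G, σ) = k. Then (G, σ) is critically k-frustrated if and only if every positive edge of (G, σ) is contained in an equilibrated edge-cut, i.e., an edge-cut ∂(X) with d⁺(X) = d⁻(X). -/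
/-!
Signed (simple) graphs: a signature is `σ : Sym2 V → Bool` (`true` = negative edge).
Switching equivalence, frustration index, negative cycles, criticality, edge-cuts.
-/

variable {V : Type*}

/-- `e` belongs to the edge-cut `∂(X)`: exactly one endpoint of `e` lies in `X`. -/
def inCut (X : Set V) (e : Sym2 V) : Prop :=
  ∃ u v, e = s(u, v) ∧ u ∈ X ∧ v ∉ X

/-- `d⁻(X)`: the number of negative edges in the edge-cut `∂(X)`. -/
noncomputable def dNeg (G : SimpleGraph V) (σ : Sym2 V → Bool) (X : Set V) : ℕ :=
  {e ∈ G.edgeSet | inCut X e ∧ σ e = true}.ncard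

/-- `d⁺(X)`: the number of positive edges in the edge-cut `∂(X)`. -/
noncomputable def dPos (G : SimpleGraph V) (σ : Sym2 V → Bool) (X : Set V) : ℕ :=
  {e ∈ G.edgeSet | inCut X e ∧ σ e = false}.ncard

section AuxLemmas

lemma cutParity_mk' (f : V → Bool) (u v : V) : cutParity f s(u, v) = xor (f u) (f v) := rfl

lemma cutParity_true_iff' (f : V → Bool) (e : Sym2 V) :
    cutParity f e = true ↔ inCut {v | f v = true} e := by
  induction e using Sym2.ind with
  | _ u v =>
    rw [cutParity_mk']
    constructor
    · intro h
      cases hu : f u <;> cases hv : f v <;> simp [hu, hv] at h ⊢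
      · exact ⟨v, u, Sym2.eq_swap, by simp [hv], by simp [hu]⟩
      · exact ⟨u, v, rfl, by simp [hu], by simp [hv]⟩
    · rintro ⟨a, b, hab, ha, hb⟩
      simp only [Set.mem_setOf_eq] at ha hb
      rw [Bool.not_eq_true] at hb
      rw [Sym2.eq_iff] at hab
      rcases hab with ⟨h1, h2⟩ | ⟨h1, h2⟩ <;> subst h1 <;> subst h2 <;> simp [ha, hb]

lemma negEC_congr' (G : SimpleGraph V) {σ1 σ2 : Sym2 V → Bool}
    (h : ∀ e ∈ G.edgeSet, σ1 e = σ2 e) : negEdgeCount G σ1 = negEdgeCount G σ2 := by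
  unfold negEdgeCount
  congr 1
  ext x
  simp only [Set.mem_setOf_eq]
  exact and_congr_right fun hx => by rw [h x hx]

lemma switch_self' (G : SimpleGraph V) (σ : Sym2 V → Bool) : SwitchEquiv G σ σ :=
  ⟨fun _ => false, fun e _ => by
    induction e using Sym2.ind with
    | _ u v => simp [cutParity_mk']⟩

lemma switch_xor' (G : SimpleGraph V) (σ : Sym2 V → Bool) (f : V → Bool) :
    SwitchEquiv G σ (fun x => xor (σ x) (cutParity f x)) := ⟨f, fun _ _ => rfl⟩

lemma frustration_le' (G : SimpleGraph V) (σ σ' : Sym2 V → Bool)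
    (h : SwitchEquiv G σ σ') : frustration G σ ≤ negEdgeCount G σ' :=
  Nat.sInf_le ⟨σ', h, rfl⟩

lemma negEC_delete' [Fintype V] (G : SimpleGraph V) (σ' : Sym2 V → Bool)
    {e : Sym2 V} (he : e ∈ G.edgeSet) :
    negEdgeCount G σ' =
      negEdgeCount (G.deleteEdges {e}) σ' + (if σ' e = true then 1 else 0) := by
  unfold negEdgeCount
  rw [SimpleGraph.edgeSet_deleteEdges]
  have hset : {x | x ∈ G.edgeSet \ {e} ∧ σ' x = true}
      = {x | x ∈ G.edgeSet ∧ σ' x = true} \ {e} := by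
    ext x
    simp only [Set.mem_setOf_eq, Set.mem_diff, Set.mem_singleton_iff]
    tauto
  rw [hset]
  by_cases h : σ' e = true
  · rw [if_pos h]
    have hmem : e ∈ {x | x ∈ G.edgeSet ∧ σ' x = true} := ⟨he, h⟩
    rw [Set.ncard_diff_singleton_add_one hmem (Set.toFinite _)]
  · rw [if_neg h, add_zero, Set.diff_singleton_eq_self (by simp [h])]

lemma count_id' [Fintype V] (G : SimpleGraph V) (σ : Sym2 V → Bool) (f : V → Bool) :
    negEdgeCount G (fun x => xor (σ x) (cutParity f x)) + dNeg G σ {v | f v = true} =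
      negEdgeCount G σ + dPos G σ {v | f v = true} := by
  unfold negEdgeCount dNeg dPos
  have hic : ∀ x : Sym2 V, inCut {v | f v = true} x ↔ cutParity f x = true :=
    fun x => (cutParity_true_iff' f x).symm
  have h1 : {x | x ∈ G.edgeSet ∧ (fun x => xor (σ x) (cutParity f x)) x = true} ∪
      {x | x ∈ G.edgeSet ∧ inCut {v | f v = true} x ∧ σ x = true}
      = {x | x ∈ G.edgeSet ∧ σ x = true} ∪
        {x | x ∈ G.edgeSet ∧ inCut {v | f v = true} x ∧ σ x = false} := by
    ext x
    simp only [Set.mem_union, Set.mem_setOf_eq, hic x]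
    cases hs : σ x <;> cases hc : cutParity f x <;> simp [hs, hc]
  have d1 : Disjoint {x | x ∈ G.edgeSet ∧ (fun x => xor (σ x) (cutParity f x)) x = true}
      {x | x ∈ G.edgeSet ∧ inCut {v | f v = true} x ∧ σ x = true} := by
    rw [Set.disjoint_left]
    rintro x ⟨_, hx⟩ ⟨_, hc, hs⟩
    rw [hic] at hc
    simp [hs, hc] at hx
  have d2 : Disjoint {x | x ∈ G.edgeSet ∧ σ x = true}
      {x | x ∈ G.edgeSet ∧ inCut {v | f v = true} x ∧ σ x = false} := by
    rw [Set.disjoint_left]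
    rintro x ⟨_, hs⟩ ⟨_, _, hs'⟩
    simp [hs] at hs'
  rw [← Set.ncard_union_eq d1 (Set.toFinite _) (Set.toFinite _),
      ← Set.ncard_union_eq d2 (Set.toFinite _) (Set.toFinite _), h1]

end AuxLemmas

/-- Let `σ` be a minimum signature with `ℓ(G, σ) = k`.  Then `(G, σ)` is
critically `k`-frustrated iff every positive edge lies in an equilibrated edge-cut. -/
theorem criticallyFrustrated_iff_equilibrated_cuts [Fintype V] (G : SimpleGraph V)
    (σ : Sym2 V → Bool) (k : ℕ) (hk : 0 < k)
    (hσ : negEdgeCount G σ = k) (hl : frustration G σ = k) :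
    CriticallyFrustrated G σ k ↔
      ∀ e ∈ G.edgeSet, σ e = false →
        ∃ X : Set V, inCut X e ∧ dPos G σ X = dNeg G σ X := by
  classical
  have key_lb : ∀ e ∈ G.edgeSet, k - 1 ≤ frustration (G.deleteEdges {e}) σ := by
    intro e he
    refine le_csInf ⟨negEdgeCount (G.deleteEdges {e}) σ, σ, switch_self' _ _, rfl⟩ ?_
    rintro m ⟨σ', ⟨f, hf⟩, rfl⟩
    have hagree : negEdgeCount (G.deleteEdges {e}) σ'
        = negEdgeCount (G.deleteEdges {e}) (fun x => xor (σ x) (cutParity f x)) :=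
      negEC_congr' _ fun x hx => hf x hx
    have h1 : k ≤ negEdgeCount G (fun x => xor (σ x) (cutParity f x)) :=
      hl ▸ frustration_le' G σ _ (switch_xor' G σ f)
    have h2 := negEC_delete' G (fun x => xor (σ x) (cutParity f x)) he
    rw [hagree]
    split at h2 <;> omega
  constructor
  · rintro ⟨-, hcrit⟩ e he hpos
    have hfr := hcrit e he
    have hne : {n | ∃ σ', SwitchEquiv (G.deleteEdges {e}) σ σ' ∧
        negEdgeCount (G.deleteEdges {e}) σ' = n}.Nonempty := ⟨_, σ, switch_self' _ _, rfl⟩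
    have hmem : frustration (G.deleteEdges {e}) σ ∈ {n | ∃ σ',
        SwitchEquiv (G.deleteEdges {e}) σ σ' ∧ negEdgeCount (G.deleteEdges {e}) σ' = n} :=
      Nat.sInf_mem hne
    rw [hfr] at hmem
    obtain ⟨σ', ⟨f, hf⟩, hcnt⟩ := hmem
    have hagree : negEdgeCount (G.deleteEdges {e}) σ'
        = negEdgeCount (G.deleteEdges {e}) (fun x => xor (σ x) (cutParity f x)) :=
      negEC_congr' _ fun x hx => hf x hx
    have h1 : k ≤ negEdgeCount G (fun x => xor (σ x) (cutParity f x)) :=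
      hl ▸ frustration_le' G σ _ (switch_xor' G σ f)
    have h2 := negEC_delete' G (fun x => xor (σ x) (cutParity f x)) he
    rw [hagree] at hcnt
    rw [hcnt] at h2
    have hcute : cutParity f e = true := by
      by_contra hc
      rw [Bool.not_eq_true] at hc
      rw [if_neg (by simp [hpos, hc])] at h2
      omega
    have hk' : negEdgeCount G (fun x => xor (σ x) (cutParity f x)) = k := by
      rw [if_pos (by simp [hpos, hcute])] at h2
      omega
    have hid := count_id' G σ f
    rw [hk', hσ] at hid
    exact ⟨{v | f v = true}, (cutParity_true_iff' f e).mp hcute, by omega⟩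
  · intro hcut
    refine ⟨hl, fun e he => le_antisymm ?_ (key_lb e he)⟩
    cases hσe : σ e with
    | true =>
      have h2 := negEC_delete' G σ he
      rw [if_pos hσe, hσ] at h2
      have hd : negEdgeCount (G.deleteEdges {e}) σ = k - 1 := by omega
      exact hd ▸ frustration_le' _ σ σ (switch_self' _ _)
    | false =>
      obtain ⟨X, hX, hEq⟩ := hcut e he hσe
      set f : V → Bool := fun v => decide (v ∈ X) with hfdef
      have hXf : {v | f v = true} = X := by ext v; simp [hfdef]
      have hcutp : cutParity f e = true :=
        (cutParity_true_iff' f e).mpr (hXf ▸ hX)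
      have hid := count_id' G σ f
      rw [hXf, hσ, hEq] at hid
      have hk' : negEdgeCount G (fun x => xor (σ x) (cutParity f x)) = k := by omega
      have h2 := negEC_delete' G (fun x => xor (σ x) (cutParity f x)) he
      rw [if_pos (by simp [hσe, hcutp]), hk'] at h2
      have hd : negEdgeCount (G.deleteEdges {e}) (fun x => xor (σ x) (cutParity f x))
          = k - 1 := by omega
      exact hd ▸ frustration_le' _ σ _ ⟨f, fun x _ => rfl⟩
end

section
/- Every critically k-frustrated signed plane graph (G, σ) has at most 2k negative facial cycles. Moreover, if it has exactly 2k negative facial cycles, then these are all of its facial cycles. -/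
/-!
Signed (simple) graphs: a signature is `σ : Sym2 V → Bool` (`true` = negative edge).
Here the frustration index is taken in its equivalent form: the minimum number of edges
meeting all negative cycles (the minimum size of a negative-cycle cover).
-/

variable {V : Type*}

/-- The frustration index of `(G, σ)`, in the form: the minimum number of edges meeting
every negative cycle (a cycle with an odd number of negative edges). -/
noncomputable def coverFrustration (G : SimpleGraph V) (σ : Sym2 V → Bool) : ℕ :=
  sInf {n | ∃ S : Finset (Sym2 V), ↑S ⊆ G.edgeSet ∧ S.card = n ∧
    ∀ (v : V) (w : G.Walk v v), w.IsCycle → Odd (w.edges.countP σ) → ∃ e ∈ S, e ∈ w.edges}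

/-- `(G, σ)` is critically `k`-frustrated: its frustration index is `k`, and deleting any
edge decreases the frustration index to `k - 1`. -/
def CriticallyFrustratedC (G : SimpleGraph V) (σ : Sym2 V → Bool) (k : ℕ) : Prop :=
  coverFrustration G σ = k ∧ ∀ e ∈ G.edgeSet, coverFrustration (G.deleteEdges {e}) σ = k - 1

/-- `c` is the edge set of a cycle of `G`. -/
def IsCycleEdgeSet [DecidableEq V] (G : SimpleGraph V) (c : Finset (Sym2 V)) : Prop :=
  ∃ (v : V) (w : G.Walk v v), w.IsCycle ∧ w.edges.toFinset = c

/-- For a list with no duplicates, `countP` equals the cardinality of the filter of the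
associated finset. -/
lemma countP_eq_card_filter_toFinset [DecidableEq V] (l : List (Sym2 V)) (hl : l.Nodup)
    (σ : Sym2 V → Bool) :
    l.countP σ = ((l.toFinset.filter (fun e => σ e = true)).card) := by
  classical
  rw [List.countP_eq_length_filter]
  have h1 : (l.filter σ).toFinset = l.toFinset.filter (fun e => σ e = true) := by
    ext x
    simp [List.mem_filter]
  rw [← h1, List.toFinset_card_of_nodup (hl.filter _)]

/-- Double counting: summing `|c ∩ S|` over a multiset of finsets equals summing the
counts of membership over `S`. -/
lemma sum_inter_card {α : Type*} [DecidableEq α] (M : Multiset (Finset α)) (S : Finset α) :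
    (M.map (fun c => (c ∩ S).card)).sum = ∑ e ∈ S, M.countP (fun c => e ∈ c) := by
  classical
  induction M using Multiset.induction with
  | empty => simp
  | cons a M ih =>
    simp only [Multiset.map_cons, Multiset.sum_cons, Multiset.countP_cons]
    have ha : a ∩ S = S.filter (fun e => e ∈ a) := by
      ext x; simp [Finset.mem_inter, and_comm]
    rw [Finset.sum_add_distrib, ← ih, ha, Finset.card_filter]
    omega

/-- A critically `k`-frustrated signed plane graph (given via its family
of facial cycles, every edge lying on exactly two of them) has at most `2k` negative
facial cycles; if it has exactly `2k` negative facial cycles, these are all of its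
facial cycles. -/
theorem negative_faces_le_two_k [Fintype V] [DecidableEq V] (G : SimpleGraph V)
    (σ : Sym2 V → Bool) (k : ℕ) (hk : 0 < k)
    (Faces : Multiset (Finset (Sym2 V)))
    (hface : ∀ c ∈ Faces, IsCycleEdgeSet G c)
    (htwo : ∀ e ∈ G.edgeSet, Faces.countP (fun c => e ∈ c) = 2)
    (hcrit : CriticallyFrustratedC G σ k) :
    Multiset.card (Faces.filter (fun c => Odd ((c.filter (fun e => σ e = true)).card)))
        ≤ 2 * k ∧
      (Multiset.card
            (Faces.filter (fun c => Odd ((c.filter (fun e => σ e = true)).card))) = 2 * k →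
        Faces.filter (fun c => Odd ((c.filter (fun e => σ e = true)).card)) = Faces) := by
  classical
  set p : Finset (Sym2 V) → Prop := fun c => Odd ((c.filter (fun e => σ e = true)).card)
    with hp
  set N : Multiset (Finset (Sym2 V)) := Faces.filter p with hN
  set R : Multiset (Finset (Sym2 V)) := Faces.filter (fun c => ¬ p c) with hR
  have hsplit : N + R = Faces := Multiset.filter_add_not p Faces
  -- Core counting lemma for any cover S of size-respecting the cycles
  have core : ∀ S : Finset (Sym2 V), ↑S ⊆ G.edgeSet →
      (∀ (v : V) (w : G.Walk v v), w.IsCycle → Odd (w.edges.countP σ) →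
        ∃ e ∈ S, e ∈ w.edges) →
      Multiset.card N ≤ (N.map (fun c => (c ∩ S).card)).sum ∧
      (Faces.map (fun c => (c ∩ S).card)).sum = 2 * S.card := by
    intro S hSsub hScov
    constructor
    · -- each negative face meets S
      have hone : ∀ c ∈ N, 1 ≤ (c ∩ S).card := by
        intro c hc
        rw [hN, Multiset.mem_filter] at hc
        obtain ⟨hcF, hcp⟩ := hc
        obtain ⟨v, w, hw, hwc⟩ := hface c hcF
        have hodd : Odd (w.edges.countP σ) := by
          rw [countP_eq_card_filter_toFinset w.edges hw.edges_nodup σ, hwc]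
          exact hcp
        obtain ⟨e, heS, hew⟩ := hScov v w hw hodd
        have hec : e ∈ c := by rw [← hwc]; simpa using hew
        have : e ∈ c ∩ S := Finset.mem_inter.mpr ⟨hec, heS⟩
        exact Finset.card_pos.mpr ⟨e, this⟩
      calc Multiset.card N = (N.map (fun _ => 1)).sum := by
            simp [Multiset.map_const', Multiset.sum_replicate]
        _ ≤ (N.map (fun c => (c ∩ S).card)).sum := by
            apply Multiset.sum_map_le_sum_map
            intro c hc; exact hone c hc
    · rw [sum_inter_card]
      have : ∀ e ∈ S, Faces.countP (fun c => e ∈ c) = 2 := fun e he => htwo e (hSsub he)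
      rw [Finset.sum_congr rfl this]
      simp [mul_comm]
  -- obtain a minimum cover
  have hne : {n | ∃ S : Finset (Sym2 V), ↑S ⊆ G.edgeSet ∧ S.card = n ∧
      ∀ (v : V) (w : G.Walk v v), w.IsCycle → Odd (w.edges.countP σ) →
        ∃ e ∈ S, e ∈ w.edges}.Nonempty := by
    refine ⟨G.edgeFinset.card, G.edgeFinset, by simp, rfl, ?_⟩
    intro v w hw hodd
    have hlen : w.edges ≠ [] := by
      intro h
      rw [h] at hodd
      simp at hodd
    obtain ⟨e, he⟩ := List.exists_mem_of_ne_nil _ hlen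
    exact ⟨e, by simpa using w.edges_subset_edgeSet he, he⟩
  have hmem := Nat.sInf_mem hne
  rw [show sInf {n | ∃ S : Finset (Sym2 V), ↑S ⊆ G.edgeSet ∧ S.card = n ∧
      ∀ (v : V) (w : G.Walk v v), w.IsCycle → Odd (w.edges.countP σ) →
        ∃ e ∈ S, e ∈ w.edges} = coverFrustration G σ from rfl, hcrit.1] at hmem
  obtain ⟨S, hSsub, hScard, hScov⟩ := hmem
  obtain ⟨h1, h2⟩ := core S hSsub hScov
  have hNR : (N.map (fun c => (c ∩ S).card)).sum + (R.map (fun c => (c ∩ S).card)).sum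
      = 2 * k := by
    rw [← Multiset.sum_add, ← Multiset.map_add, hsplit, h2, hScard]
  constructor
  · omega
  · -- equality case
    intro hcard
    rw [Multiset.filter_eq_self]
    by_contra hnot
    push_neg at hnot
    obtain ⟨c0, hc0F, hc0p⟩ := hnot
    -- get an edge of c0
    obtain ⟨v0, w0, hw0, hw0c⟩ := hface c0 hc0F
    have hlen3 := hw0.three_le_length
    have hedne : w0.edges ≠ [] := by
      intro h
      have := w0.length_edges
      rw [h] at this
      simp at this
      omega
    obtain ⟨e, hew0⟩ := List.exists_mem_of_ne_nil _ hedne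
    have heG : e ∈ G.edgeSet := w0.edges_subset_edgeSet hew0
    have hec0 : e ∈ c0 := by rw [← hw0c]; simpa using hew0
    -- minimum cover of G - e
    have hne' : {n | ∃ S : Finset (Sym2 V), ↑S ⊆ (G.deleteEdges {e}).edgeSet ∧ S.card = n ∧
        ∀ (v : V) (w : (G.deleteEdges {e}).Walk v v), w.IsCycle → Odd (w.edges.countP σ) →
          ∃ e' ∈ S, e' ∈ w.edges}.Nonempty := by
      refine ⟨(G.deleteEdges {e}).edgeFinset.card, (G.deleteEdges {e}).edgeFinset,
        by simp, rfl, ?_⟩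
      intro v w hw hodd
      have hlen : w.edges ≠ [] := by
        intro h
        rw [h] at hodd
        simp at hodd
      obtain ⟨e', he'⟩ := List.exists_mem_of_ne_nil _ hlen
      exact ⟨e', by simpa using w.edges_subset_edgeSet he', he'⟩
    have hmem' := Nat.sInf_mem hne'
    rw [show sInf {n | ∃ S : Finset (Sym2 V), ↑S ⊆ (G.deleteEdges {e}).edgeSet ∧ S.card = n ∧
        ∀ (v : V) (w : (G.deleteEdges {e}).Walk v v), w.IsCycle → Odd (w.edges.countP σ) →
          ∃ e' ∈ S, e' ∈ w.edges} = coverFrustration (G.deleteEdges {e}) σ from rfl,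
      hcrit.2 e heG] at hmem'
    obtain ⟨S', hS'sub, hS'card, hS'cov⟩ := hmem'
    have heNotS' : e ∉ S' := by
      intro h
      have := hS'sub h
      rw [SimpleGraph.edgeSet_deleteEdges] at this
      exact this.2 rfl
    set T : Finset (Sym2 V) := insert e S' with hT
    have hTsub : ↑T ⊆ G.edgeSet := by
      intro x hx
      rcases Finset.mem_insert.mp hx with h | h
      · exact h ▸ heG
      · have := hS'sub h
        rw [SimpleGraph.edgeSet_deleteEdges] at this
        exact this.1
    have hTcard : T.card = k := by
      rw [hT, Finset.card_insert_of_notMem heNotS', hS'card]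
      omega
    have hTcov : ∀ (v : V) (w : G.Walk v v), w.IsCycle → Odd (w.edges.countP σ) →
        ∃ e' ∈ T, e' ∈ w.edges := by
      intro v w hw hodd
      by_cases hew : e ∈ w.edges
      · exact ⟨e, Finset.mem_insert_self _ _, hew⟩
      · have hall : ∀ e' ∈ w.edges, e' ∉ ({e} : Set (Sym2 V)) := by
          intro e' he' h
          rw [Set.mem_singleton_iff] at h
          exact hew (h ▸ he')
        have hw' : (w.toDeleteEdges {e} hall).IsCycle := hw.toDeleteEdges _ _ _
        have hedges : (w.toDeleteEdges {e} hall).edges = w.edges :=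
          SimpleGraph.Walk.edges_transfer _ _
        obtain ⟨e', he'S, he'w⟩ := hS'cov v (w.toDeleteEdges {e} hall) hw'
          (by rw [hedges]; exact hodd)
        exact ⟨e', Finset.mem_insert_of_mem he'S, by rw [← hedges]; exact he'w⟩
    obtain ⟨h1', h2'⟩ := core T hTsub hTcov
    have hNR' : (N.map (fun c => (c ∩ T).card)).sum + (R.map (fun c => (c ∩ T).card)).sum
        = 2 * k := by
      rw [← Multiset.sum_add, ← Multiset.map_add, hsplit, h2', hTcard]
    have hRzero : (R.map (fun c => (c ∩ T).card)).sum = 0 := by omega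
    have hc0R : c0 ∈ R := by
      rw [hR, Multiset.mem_filter]; exact ⟨hc0F, hc0p⟩
    have hc0T : (c0 ∩ T).card = 0 := by
      have : (c0 ∩ T).card ∈ R.map (fun c => (c ∩ T).card) :=
        Multiset.mem_map_of_mem _ hc0R
      exact Multiset.sum_eq_zero_iff.mp hRzero _ this
    have : e ∈ c0 ∩ T := Finset.mem_inter.mpr ⟨hec0, Finset.mem_insert_self _ _⟩
    rw [Finset.card_eq_zero] at hc0T
    simp [hc0T] at this
end

section
/- Let (G, σ) be a (K₅, −)-minor-free critically k-frustrated signed graph admitting a ≤₂-negative cycle cover 𝒞 with |𝒞| = 2k (each edge lies in at most two cycles of 𝒞). Then 𝒞 is a negative cycle double cover: every edge of G lies in exactly two cycles of 𝒞. -/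
/-!
Signed (simple) graphs: a signature is `σ : Sym2 V → Bool` (`true` = negative edge).
Here the frustration index is taken in its equivalent form: the minimum number of edges
meeting all negative cycles (the minimum size of a negative-cycle cover).
-/

variable {V : Type*}

/-- `c` is the edge set of a negative cycle of `(G, σ)`. -/
def IsNegCycleEdgeSet [DecidableEq V] (G : SimpleGraph V) (σ : Sym2 V → Bool)
    (c : Finset (Sym2 V)) : Prop :=
  IsCycleEdgeSet G c ∧ Odd ((c.filter (fun e => σ e = true)).card)

/-- Let `(G, σ)` be a critically `k`-frustrated signed graph, assumed
`(K₅, -)`-minor-free via the Schrijver bound `hSchrijver` (valid for it and all of its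
subgraphs): any family of negative cycles using each edge at most twice has size at most
twice the frustration index.  If `𝒞` is a family of `2k` negative cycles with every edge
of `G` in at most two of them, then every edge of `G` lies in exactly two cycles of `𝒞`
(`𝒞` is a negative cycle double cover). -/
theorem negCycleCover_is_doubleCover [Fintype V] [DecidableEq V] (G : SimpleGraph V)
    (σ : Sym2 V → Bool) (k : ℕ) (hk : 0 < k)
    (hcrit : CriticallyFrustratedC G σ k)
    (𝒞 : Multiset (Finset (Sym2 V)))
    (hneg : ∀ c ∈ 𝒞, IsNegCycleEdgeSet G σ c)
    (hcard : Multiset.card 𝒞 = 2 * k)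
    (hle2 : ∀ e ∈ G.edgeSet, 𝒞.countP (fun c => e ∈ c) ≤ 2)
    (hSchrijver : ∀ (F : Set (Sym2 V)) (𝒟 : Multiset (Finset (Sym2 V))),
      (∀ c ∈ 𝒟, IsNegCycleEdgeSet (G.deleteEdges F) σ c) →
      (∀ e ∈ (G.deleteEdges F).edgeSet, 𝒟.countP (fun c => e ∈ c) ≤ 2) →
      Multiset.card 𝒟 ≤ 2 * coverFrustration (G.deleteEdges F) σ) :
    ∀ e ∈ G.edgeSet, 𝒞.countP (fun c => e ∈ c) = 2 := by
  intro e he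
  have h2 := hle2 e he
  by_contra hne
  have h1 : 𝒞.countP (fun c => e ∈ c) ≤ 1 := by omega
  set 𝒟 := 𝒞.filter (fun c => e ∉ c) with h𝒟
  have hDcard : Multiset.card 𝒟 ≥ 2 * k - 1 := by
    have := Multiset.countP_eq_card_filter (fun c => e ∈ c) 𝒞
    have hsplit : Multiset.card (𝒞.filter (fun c => e ∈ c)) +
        Multiset.card 𝒟 = Multiset.card 𝒞 := by
      rw [h𝒟, ← Multiset.card_add, Multiset.filter_add_not]
    omega
  have hDneg : ∀ c ∈ 𝒟, IsNegCycleEdgeSet (G.deleteEdges {e}) σ c := by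
    intro c hc
    rw [h𝒟, Multiset.mem_filter] at hc
    obtain ⟨hcC, hec⟩ := hc
    obtain ⟨⟨v, w, hw, hwe⟩, hodd⟩ := hneg c hcC
    refine ⟨⟨v, w.transfer (G.deleteEdges {e}) ?_, hw.transfer _, by
      rw [SimpleGraph.Walk.edges_transfer]; exact hwe⟩, hodd⟩
    intro f hf
    rw [SimpleGraph.edgeSet_deleteEdges]
    refine ⟨SimpleGraph.Walk.edges_subset_edgeSet w hf, ?_⟩
    simp only [Set.mem_singleton_iff]
    rintro rfl
    exact hec (hwe ▸ List.mem_toFinset.mpr hf)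
  have hDle2 : ∀ f ∈ (G.deleteEdges {e}).edgeSet, 𝒟.countP (fun c => f ∈ c) ≤ 2 := by
    intro f hf
    rw [SimpleGraph.edgeSet_deleteEdges] at hf
    calc 𝒟.countP (fun c => f ∈ c) ≤ 𝒞.countP (fun c => f ∈ c) :=
          Multiset.countP_le_of_le _ (Multiset.filter_le _ _)
      _ ≤ 2 := hle2 f hf.1
  have := hSchrijver {e} 𝒟 hDneg hDle2
  rw [hcrit.2 e he] at this
  omega
end

section
/- Let (G, σ) be a signed graph whose underlying graph G is Eulerian and which has no (K₅, −)-minor; assume (by Schrijver's theorem) that the maximum number of pairwise edge-disjoint negative cycles equals ℓ(G, σ). Then for the signed graph (G', σ') obtained from (G, σ) by doubling every edge (each new edge with the same sign as its original), one has ℓ(G', σ') = 2·ℓ(G, σ). -/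
/-!
Signed multigraphs (loops and parallel edges allowed): an edge type `E` with an endpoint
map `ends : E → Sym2 V` and a signature `σ : E → Bool` (`true` = negative edge).
-/

/-- A multigraph on vertices `V` with edges `E`: each edge has an unordered pair of
endpoints (a loop has endpoints `s(v, v)`). -/
structure Multigraph (V E : Type*) where
  ends : E → Sym2 V

namespace Multigraph

variable {V E : Type*}

/-- A cycle of a multigraph: cyclically ordered pairwise distinct vertices
`v₀, …, vₙ` together with pairwise distinct edges `e₀, …, eₙ` where `eᵢ` joins
`vᵢ` and `vᵢ₊₁` (indices mod `n + 1`).  With `n = 0` this is a loop, with `n = 1`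
a pair of parallel edges. -/
structure Cycle (G : Multigraph V E) where
  n : ℕ
  vert : Fin (n + 1) → V
  edge : Fin (n + 1) → E
  vinj : Function.Injective vert
  einj : Function.Injective edge
  hends : ∀ i, G.ends (edge i) = s(vert i, vert (i + 1))

/-- A cycle is negative if it contains an odd number of negative edges. -/
def Cycle.IsNeg {G : Multigraph V E} (σ : E → Bool) (c : G.Cycle) : Prop :=
  Odd ((Finset.univ.filter (fun i => σ (c.edge i) = true)).card)

/-- The edge set of a cycle. -/
def Cycle.edgeFinset [DecidableEq E] {G : Multigraph V E} (c : G.Cycle) : Finset E :=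
  Finset.univ.image c.edge

/-- `s` is the edge set of a negative cycle of `(G, σ)`. -/
def IsNegCycleEdgeSet [DecidableEq E] (G : Multigraph V E) (σ : E → Bool)
    (s : Finset E) : Prop :=
  ∃ c : G.Cycle, c.IsNeg σ ∧ c.edgeFinset = s

/-- The frustration index of `(G, σ)`, in the form: the minimum number of edges meeting
every negative cycle. -/
noncomputable def coverFrustration [Fintype E] (G : Multigraph V E) (σ : E → Bool) : ℕ :=
  sInf {n | ∃ S : Finset E, S.card = n ∧ ∀ c : G.Cycle, c.IsNeg σ → ∃ i, c.edge i ∈ S}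

/-- The degree of a vertex in a multigraph (loops count twice). -/
def degree [Fintype E] [DecidableEq V] (G : Multigraph V E) (v : V) : ℕ :=
  ∑ e, (if G.ends e = s(v, v) then 2 else if v ∈ G.ends e then 1 else 0)

/-- Doubling every edge of a multigraph: the edge type becomes `E ⊕ E`, both copies of an
edge keeping its original endpoints. -/
def double (G : Multigraph V E) : Multigraph V (E ⊕ E) :=
  ⟨fun e => G.ends (Sum.elim id id e)⟩

end Multigraph

namespace Multigraph

variable {V E : Type*}

/-- Lift a cycle of `G` to a cycle of `G.double` along a section `ι` of the
projection `Sum.elim id id`. -/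
def Cycle.doubleLift {G : Multigraph V E} (c : G.Cycle) (ι : E → E ⊕ E)
    (hι : ∀ e, Sum.elim id id (ι e) = e) : (G.double).Cycle where
  n := c.n
  vert := c.vert
  edge := fun i => ι (c.edge i)
  vinj := c.vinj
  einj := fun i j h => c.einj (by
    have h' := congrArg (Sum.elim (id : E → E) id) h
    simpa [hι] using h')
  hends := fun i => by
    show G.ends (Sum.elim id id (ι (c.edge i))) = _
    rw [hι]; exact c.hends i

lemma Cycle.doubleLift_isNeg {G : Multigraph V E} (c : G.Cycle) (σ : E → Bool)
    (ι : E → E ⊕ E) (hι : ∀ e, Sum.elim id id (ι e) = e) (h : c.IsNeg σ) :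
    (c.doubleLift ι hι).IsNeg (fun e => σ (Sum.elim id id e)) := by
  unfold Cycle.IsNeg at h ⊢
  simp only [Cycle.doubleLift, hι]
  exact h

lemma even_filter_of_pair {n : ℕ} (hn : n = 1) (i j : Fin (n + 1)) (hij : i ≠ j)
    (P : Fin (n + 1) → Prop) [DecidablePred P] (hPij : P i ↔ P j) :
    Even (Finset.univ.filter P).card := by
  subst hn
  have hc : ({i, j} : Finset (Fin 2)).card = 2 := by
    rw [Finset.card_insert_of_notMem (by simpa using hij), Finset.card_singleton]
  have huniv : ({i, j} : Finset (Fin 2)) = Finset.univ :=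
    Finset.eq_univ_of_card _ (by simp [hc])
  rw [← huniv]
  by_cases hP : P i
  · have hPj := hPij.mp hP
    rw [Finset.filter_insert, if_pos hP, Finset.filter_singleton, if_pos hPj, hc]
    exact even_two
  · have hPj : ¬ P j := fun h => hP (hPij.mpr h)
    rw [Finset.filter_insert, if_neg hP, Finset.filter_singleton, if_neg hPj]
    simp

end Multigraph

/-- Let `(G, σ)` be an Eulerian signed multigraph for which (by
Schrijver's theorem for Eulerian `(K₅, -)`-minor-free signed graphs) the maximum number
of pairwise edge-disjoint negative cycles equals the frustration index.  Then doubling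
every edge doubles the frustration index. -/
theorem frustration_double_eq_two_mul {V E : Type*} [DecidableEq V] [Fintype E]
    [DecidableEq E] (G : Multigraph V E) (σ : E → Bool)
    (heuler : ∀ v : V, Even (G.degree v))
    (hpack : ∃ s : Fin (G.coverFrustration σ) → Finset E,
      (∀ i, Multigraph.IsNegCycleEdgeSet G σ (s i)) ∧
        ∀ i j, i ≠ j → Disjoint (s i) (s j))
    (hmax : ∀ (m : ℕ) (s : Fin m → Finset E),
      (∀ i, Multigraph.IsNegCycleEdgeSet G σ (s i)) →
      (∀ i j, i ≠ j → Disjoint (s i) (s j)) → m ≤ G.coverFrustration σ) :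
    (G.double).coverFrustration (fun e => σ (Sum.elim id id e)) =
      2 * G.coverFrustration σ := by
  classical
  set ℓ := G.coverFrustration σ with hℓ
  set σ' : E ⊕ E → Bool := fun e => σ (Sum.elim id id e) with hσ'
  have hne : {n | ∃ S : Finset E, S.card = n ∧
      ∀ c : G.Cycle, c.IsNeg σ → ∃ i, c.edge i ∈ S}.Nonempty :=
    ⟨(Finset.univ : Finset E).card, Finset.univ, rfl, fun c _ => ⟨0, Finset.mem_univ _⟩⟩
  have hne' : {n | ∃ S : Finset (E ⊕ E), S.card = n ∧
      ∀ c : (G.double).Cycle, c.IsNeg σ' → ∃ i, c.edge i ∈ S}.Nonempty :=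
    ⟨(Finset.univ : Finset (E ⊕ E)).card, Finset.univ, rfl,
      fun c _ => ⟨0, Finset.mem_univ _⟩⟩
  obtain ⟨S, hScard0, hScover⟩ := Nat.sInf_mem hne
  have hScard : S.card = ℓ := hScard0
  apply le_antisymm
  · -- upper bound: double a minimum cover
    apply Nat.sInf_le
    refine ⟨S.image Sum.inl ∪ S.image Sum.inr, ?_, ?_⟩
    · rw [Finset.card_union_of_disjoint (by simp [Finset.disjoint_left]),
        Finset.card_image_of_injective _ Sum.inl_injective,
        Finset.card_image_of_injective _ Sum.inr_injective, hScard, two_mul]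
    · intro c' hneg
      by_cases hp : Function.Injective (fun i => Sum.elim id id (c'.edge i))
      · let c : G.Cycle :=
          ⟨c'.n, c'.vert, fun i => Sum.elim id id (c'.edge i), c'.vinj, hp,
            fun i => c'.hends i⟩
        have hcneg : c.IsNeg σ := hneg
        obtain ⟨i, hi⟩ := hScover c hcneg
        refine ⟨i, ?_⟩
        rcases h : c'.edge i with e | e
        · apply Finset.mem_union_left
          exact Finset.mem_image_of_mem _ (by
            have : Sum.elim id id (c'.edge i) ∈ S := hi
            rwa [h] at this)
        · apply Finset.mem_union_right
          exact Finset.mem_image_of_mem _ (by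
            have : Sum.elim id id (c'.edge i) ∈ S := hi
            rwa [h] at this)
      · exfalso
        rw [Function.not_injective_iff] at hp
        obtain ⟨i, j, hfij, hij⟩ := hp
        have hends : s(c'.vert i, c'.vert (i + 1)) = s(c'.vert j, c'.vert (j + 1)) := by
          rw [← c'.hends i, ← c'.hends j]
          exact congrArg G.ends hfij
        rw [Sym2.eq_iff] at hends
        rcases hends with ⟨h1, _⟩ | ⟨h1, h2⟩
        · exact hij (c'.vinj h1)
        · have hij1 : i = j + 1 := c'.vinj h1
          have hji : i + 1 = j := c'.vinj h2
          have h2eq : i = i + 1 + 1 := by rw [hji]; exact hij1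
          have hn1 : c'.n ≠ 0 := by
            intro h0
            apply hij
            have hi := i.isLt
            have hj := j.isLt
            apply Fin.ext
            omega
          have h20 : (1 + 1 : Fin (c'.n + 1)) = 0 := by
            have := h2eq
            rw [add_assoc] at this
            exact (left_eq_add.mp this)
          have hval : ((1 : Fin (c'.n + 1)).val + (1 : Fin (c'.n + 1)).val) %
              (c'.n + 1) = 0 := by
            have := congrArg Fin.val h20
            rwa [Fin.val_add, Fin.val_zero] at this
          have hone : (1 : Fin (c'.n + 1)).val = 1 := by
            rw [Fin.val_one']
            exact Nat.mod_eq_of_lt (by omega)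
          rw [hone] at hval
          have hdvd : (c'.n + 1) ∣ 2 := Nat.dvd_of_mod_eq_zero hval
          have hle : c'.n + 1 ≤ 2 := Nat.le_of_dvd (by norm_num) hdvd
          have hn : c'.n = 1 := by omega
          have heven : Even ((Finset.univ.filter
              (fun k => σ' (c'.edge k) = true)).card) := by
            apply Multigraph.even_filter_of_pair hn i j hij
            have : σ' (c'.edge i) = σ' (c'.edge j) := congrArg σ hfij
            rw [this]
          exact (Nat.not_odd_iff_even.mpr heven) hneg
  · -- lower bound: the packing doubles
    obtain ⟨s, hsneg, hsdisj⟩ := hpack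
    apply le_csInf hne'
    rintro n ⟨S', hcard, hcover⟩
    set t : Fin ℓ ⊕ Fin ℓ → Finset (E ⊕ E) :=
      Sum.elim (fun i => (s i).image Sum.inl) (fun i => (s i).image Sum.inr) with ht
    have hx : ∀ k : Fin ℓ ⊕ Fin ℓ, ∃ x, x ∈ t k ∧ x ∈ S' := by
      rintro (i | i)
      · obtain ⟨c, hcneg, hcedge⟩ := hsneg i
        obtain ⟨idx, hidx⟩ := hcover (c.doubleLift Sum.inl (fun _ => rfl))
          (c.doubleLift_isNeg σ _ _ hcneg)
        refine ⟨Sum.inl (c.edge idx), Finset.mem_image_of_mem _ ?_, hidx⟩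
        rw [← hcedge]
        exact Finset.mem_image_of_mem _ (Finset.mem_univ _)
      · obtain ⟨c, hcneg, hcedge⟩ := hsneg i
        obtain ⟨idx, hidx⟩ := hcover (c.doubleLift Sum.inr (fun _ => rfl))
          (c.doubleLift_isNeg σ _ _ hcneg)
        refine ⟨Sum.inr (c.edge idx), Finset.mem_image_of_mem _ ?_, hidx⟩
        rw [← hcedge]
        exact Finset.mem_image_of_mem _ (Finset.mem_univ _)
    choose x hxt hxS using hx
    have htd : ∀ k k' : Fin ℓ ⊕ Fin ℓ, k ≠ k' → Disjoint (t k) (t k') := by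
      rintro (i | i) (j | j) hkk'
      · exact (Finset.disjoint_image Sum.inl_injective).mpr
          (hsdisj i j (by rintro rfl; exact hkk' rfl))
      · simp only [ht, Sum.elim_inl, Sum.elim_inr, Finset.disjoint_left,
          Finset.mem_image]
        rintro a ⟨u, _, rfl⟩ ⟨w, _, h⟩
        exact Sum.inl_ne_inr h.symm
      · simp only [ht, Sum.elim_inl, Sum.elim_inr, Finset.disjoint_left,
          Finset.mem_image]
        rintro a ⟨u, _, rfl⟩ ⟨w, _, h⟩
        exact Sum.inl_ne_inr h
      · exact (Finset.disjoint_image Sum.inr_injective).mpr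
          (hsdisj i j (by rintro rfl; exact hkk' rfl))
    have hinj : Set.InjOn x (Finset.univ : Finset (Fin ℓ ⊕ Fin ℓ)) := by
      intro k _ k' _ h
      by_contra hkk'
      exact (Finset.disjoint_left.mp (htd k k' hkk') (hxt k)) (h ▸ hxt k')
    calc 2 * ℓ = (Finset.univ : Finset (Fin ℓ ⊕ Fin ℓ)).card := by
          simp [two_mul]
      _ ≤ S'.card := Finset.card_le_card_of_injOn x (fun k _ => hxS k) hinj
      _ = n := hcard
end
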